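/- On the open set {(θ, L) : θ > 0, L > L_d(θ)} the function (θ, L) ↦ X_m(θ, L) is differentiable, with partial derivatives ∂X_m/∂θ = [(3/4)(θ − X_m)^(−5/2)] / [(3/4)(θ − X_m)^(−5/2) − 2L] > 1 and ∂X_m/∂L = 2·X_m / [(3/4)(θ − X_m)^(−5/2) − 2L] > 0. -/

import Mathlib

open Real Set Filter Topology

/-- The auxiliary energy `f(X) = (θ - X)^(-1/2) - L·X²` for `0 < X < θ`, with `f(0) = 0`. -/
noncomputable def f (θ L X : ℝ) : ℝ :=
  if X = 0 then 0 else (θ - X) ^ (-(1:ℝ)/2) - L * X ^ 2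

/-- `L_d(θ) = (25/24)·√(5/3)·θ^(-5/2)`. -/
noncomputable def Ld (θ : ℝ) : ℝ := (25/24) * Real.sqrt (5/3) * θ ^ (-(5:ℝ)/2)

/-- `θ* = (5/4)·α^(-1/2)`. -/
noncomputable def θstar (α : ℝ) : ℝ := (5/4) * α ^ (-(1:ℝ)/2)

/-- `L_01(θ) = (5^(5/2)/16)·θ^(-5/2)`. -/
noncomputable def L01 (θ : ℝ) : ℝ := ((5:ℝ) ^ ((5:ℝ)/2) / 16) * θ ^ (-(5:ℝ)/2)

/-- `L_02(θ) = α^(5/4)·(√α·θ - 1)^(-1/2)`. -/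
noncomputable def L02 (α θ : ℝ) : ℝ := α ^ ((5:ℝ)/4) * (Real.sqrt α * θ - 1) ^ (-(1:ℝ)/2)

/-- `L_12(θ) = (2α³θ + 2α²√(α(αθ² - 1)))^(1/2)`. -/
noncomputable def L12 (α θ : ℝ) : ℝ :=
  Real.sqrt (2*α^3*θ + 2*α^2 * Real.sqrt (α*(α*θ^2 - 1)))

section Helpers

lemma chi_deriv (θ Y : ℝ) (h0 : 0 < Y) (h1 : Y < θ) :
    HasDerivAt (fun Z => (θ - Z) ^ (-(3:ℝ)/2) / (4*Z))
      ((θ - Y) ^ (-(5:ℝ)/2) * (5*Y - 2*θ) / (8*Y^2)) Y := by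
  have hu : 0 < θ - Y := sub_pos.2 h1
  have h2 : HasDerivAt (fun Z => (θ - Z) ^ (-(3:ℝ)/2))
      ((-1) * (-(3:ℝ)/2) * (θ - Y) ^ ((-(3:ℝ)/2) - 1)) Y :=
    ((hasDerivAt_id Y).const_sub θ).rpow_const (Or.inl hu.ne')
  have h3 : HasDerivAt (fun Z => 4*Z) 4 Y := by
    simpa using (hasDerivAt_id Y).const_mul (4:ℝ)
  have h := h2.div h3 (by positivity)
  refine h.congr_deriv (Eq.symm ?_)
  have e1 : (-(3:ℝ)/2 - 1) = (-(5:ℝ)/2) := by norm_num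
  have e2 : (θ - Y) ^ (-(3:ℝ)/2) = (θ - Y) * (θ - Y) ^ (-(5:ℝ)/2) := by
    rw [show (-(3:ℝ)/2) = 1 + (-(5:ℝ)/2) by norm_num, Real.rpow_add hu, Real.rpow_one]
  rw [e1, e2]
  field_simp
  ring

lemma psi_deriv (c Y : ℝ) (h0 : 0 < Y) :
    HasDerivAt (fun Z => Z + c * Z ^ (-(2:ℝ)/3))
      (1 + c * ((-(2:ℝ)/3) * Y ^ (-(5:ℝ)/3))) Y := by
  have h2 : HasDerivAt (fun Z : ℝ => Z ^ (-(2:ℝ)/3)) ((-(2:ℝ)/3) * Y ^ ((-(2:ℝ)/3) - 1)) Y :=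
    Real.hasDerivAt_rpow_const (Or.inl h0.ne')
  have := (hasDerivAt_id Y).add (h2.const_mul c)
  refine this.congr_deriv (Eq.symm ?_)
  norm_num

lemma chi_mono (θ : ℝ) (hθ : 0 < θ) :
    StrictMonoOn (fun Z => (θ - Z) ^ (-(3:ℝ)/2) / (4*Z)) (Ioo (2*θ/5) θ) := by
  apply strictMonoOn_of_deriv_pos (convex_Ioo _ _)
  · intro Y hY
    have h0 : 0 < Y := lt_trans (by linarith) hY.1
    exact ((chi_deriv θ Y h0 hY.2).continuousAt).continuousWithinAt
  · intro Y hY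
    rw [interior_Ioo] at hY
    have h0 : 0 < Y := lt_trans (by linarith) hY.1
    rw [(chi_deriv θ Y h0 hY.2).deriv]
    have hu : (0:ℝ) < (θ - Y) ^ (-(5:ℝ)/2) := Real.rpow_pos_of_pos (by linarith [hY.2]) _
    have : 0 < 5*Y - 2*θ := by linarith [hY.1]
    positivity

lemma psi_mono (c : ℝ) (hc : 0 < c) :
    StrictMonoOn (fun Z => Z + c * Z ^ (-(2:ℝ)/3)) (Ici (((2/3)*c) ^ ((3:ℝ)/5))) := by
  set X0 : ℝ := ((2/3)*c) ^ ((3:ℝ)/5) with hX0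
  have hX0pos : 0 < X0 := Real.rpow_pos_of_pos (by linarith) _
  have hX053 : X0 ^ ((5:ℝ)/3) = (2/3)*c := by
    rw [hX0, ← Real.rpow_mul (by positivity)]; norm_num
  apply strictMonoOn_of_deriv_pos (convex_Ici _)
  · intro Y hY
    have h0 : 0 < Y := lt_of_lt_of_le hX0pos hY
    exact ((psi_deriv c Y h0).continuousAt).continuousWithinAt
  · intro Y hY
    rw [interior_Ici] at hY
    have h0 : 0 < Y := lt_trans hX0pos hY
    rw [(psi_deriv c Y h0).deriv]
    have h53 : (2/3)*c < Y ^ ((5:ℝ)/3) := by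
      rw [← hX053]; exact Real.rpow_lt_rpow hX0pos.le hY (by norm_num)
    have hP : 0 < Y ^ ((5:ℝ)/3) := Real.rpow_pos_of_pos h0 _
    have hYn : Y ^ (-(5:ℝ)/3) = (Y ^ ((5:ℝ)/3))⁻¹ := by
      rw [← Real.rpow_neg h0.le]; norm_num
    rw [hYn]
    have := (div_lt_one hP).2 h53
    have hexp : 1 + c * ((-(2:ℝ)/3) * (Y ^ ((5:ℝ)/3))⁻¹) = 1 - ((2/3)*c) / Y ^ ((5:ℝ)/3) := by
      field_simp; ring
    rw [hexp]; linarith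

lemma cont_of_inverse {F g : ℝ → ℝ} {s : Set ℝ} {a : ℝ} (hmono : StrictMonoOn F s)
    (hev : ∀ᶠ b in 𝓝 a, g b ∈ s ∧ F (g b) = b)
    (hnear : ∀ ε > (0:ℝ), ∃ ε' > (0:ℝ), ε' ≤ ε ∧ g a - ε' ∈ s ∧ g a + ε' ∈ s) :
    ContinuousAt g a := by
  rw [Metric.continuousAt_iff]
  intro ε hε
  obtain ⟨ε', hε'0, hε'ε, hm, hp⟩ := hnear ε hε
  obtain ⟨hgs, hFa⟩ := hev.self_of_nhds
  have h1 : F (g a - ε') < a := by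
    have := hmono hm hgs (show g a - ε' < g a by linarith)
    rwa [hFa] at this
  have h2 : a < F (g a + ε') := by
    have := hmono hgs hp (show g a < g a + ε' by linarith)
    rwa [hFa] at this
  obtain ⟨δ0, hδ0, hball⟩ := Metric.eventually_nhds_iff.1 hev
  refine ⟨min δ0 (min (a - F (g a - ε')) (F (g a + ε') - a)), lt_min hδ0 (lt_min (by linarith) (by linarith)), ?_⟩
  intro b hb
  rw [Real.dist_eq] at hb ⊢
  have hb0 := abs_lt.1 (lt_of_lt_of_le hb (min_le_left _ _))
  obtain ⟨hgbs, hFb⟩ := hball (show dist b a < δ0 by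
    rw [Real.dist_eq]; exact lt_of_lt_of_le hb (min_le_left _ _))
  have hbabs := abs_lt.1 (lt_of_lt_of_le hb (min_le_right _ _ |>.trans (min_le_left _ _)) )
  have hbabs2 := abs_lt.1 (lt_of_lt_of_le hb ((min_le_right _ _).trans (min_le_right _ _)))
  have hb2 : F (g a - ε') < b := by linarith
  have hb3 : b < F (g a + ε') := by linarith
  have hlow : g a - ε' < g b := by
    by_contra h
    push_neg at h
    have : F (g b) ≤ F (g a - ε') := (hmono.le_iff_le hgbs hm).2 h
    rw [hFb] at this; linarith
  have hupp : g b < g a + ε' := by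
    by_contra h
    push_neg at h
    have : F (g a + ε') ≤ F (g b) := (hmono.le_iff_le hp hgbs).2 h
    rw [hFb] at this; linarith
  rw [abs_lt]
  constructor <;> linarith

lemma sol_fact (L c t Y : ℝ) (hL0 : 0 < L) (hc : c = (4*L) ^ (-(2:ℝ)/3))
    (ht : 0 < t) (h1 : 2*t/5 < Y) (h2 : Y < t)
    (heq : (1/2) * (t - Y) ^ (-(3:ℝ)/2) = 2*L*Y) :
    Y + c * Y ^ (-(2:ℝ)/3) = t ∧ ((2/3)*c) ^ ((3:ℝ)/5) < Y := by
  have hY0 : 0 < Y := lt_trans (by linarith) h1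
  have hu : 0 < t - Y := by linarith
  have h34 : (t - Y) ^ (-(3:ℝ)/2) = 4*L*Y := by linarith
  have hcY : c * Y ^ (-(2:ℝ)/3) = t - Y := by
    rw [hc, ← Real.mul_rpow (by positivity) hY0.le, ← h34, ← Real.rpow_mul hu.le]
    norm_num
  have hc0 : 0 < c := by rw [hc]; positivity
  refine ⟨by linarith, ?_⟩
  have hY53e : c * Y ^ (-(5:ℝ)/3) = (t - Y)/Y := by
    rw [show (-(5:ℝ)/3) = (-(2:ℝ)/3) + (-1:ℝ) by norm_num, Real.rpow_add hY0,
      Real.rpow_neg_one, ← mul_assoc, hcY, div_eq_mul_inv]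
  have hlt : (2/3) * (c * Y ^ (-(5:ℝ)/3)) < 1 := by
    rw [hY53e, ← mul_div_assoc, div_lt_one hY0]
    linarith
  have hprod : Y ^ (-(5:ℝ)/3) * Y ^ ((5:ℝ)/3) = 1 := by
    rw [← Real.rpow_add hY0]; norm_num
  have hP : 0 < Y ^ ((5:ℝ)/3) := Real.rpow_pos_of_pos hY0 _
  have hY53 : (2/3)*c < Y ^ ((5:ℝ)/3) := by
    nlinarith [mul_lt_mul_of_pos_right hlt hP]
  by_contra h
  push_neg at h
  have hle : Y ^ ((5:ℝ)/3) ≤ (((2/3)*c) ^ ((3:ℝ)/5)) ^ ((5:ℝ)/3) :=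
    Real.rpow_le_rpow hY0.le h (by norm_num)
  rw [← Real.rpow_mul (by positivity : (0:ℝ) ≤ (2/3)*c)] at hle
  norm_num at hle
  linarith

end Helpers

set_option maxHeartbeats 2000000 in
/-- On `{(θ, L) : θ > 0, L > L_d(θ)}`, the function `X_m(θ, L)` (the unique
`X ∈ (2θ/5, θ)` with `(1/2)(θ - X)^(-3/2) = 2LX`) is differentiable in each variable, with
`∂X_m/∂θ = (3/4)(θ - X_m)^(-5/2) / ((3/4)(θ - X_m)^(-5/2) - 2L) > 1` and
`∂X_m/∂L = 2X_m / ((3/4)(θ - X_m)^(-5/2) - 2L) > 0`. -/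

theorem stmt_3 (Xm : ℝ → ℝ → ℝ)
    (hXm : ∀ θ L : ℝ, 0 < θ → Ld θ < L →
      Xm θ L ∈ Ioo (2*θ/5) θ ∧ (1/2) * (θ - Xm θ L) ^ (-(3:ℝ)/2) = 2 * L * Xm θ L)
    (θ L : ℝ) (hθ : 0 < θ) (hL : Ld θ < L) :
    HasDerivAt (fun t => Xm t L)
      (((3/4) * (θ - Xm θ L) ^ (-(5:ℝ)/2)) /
        ((3/4) * (θ - Xm θ L) ^ (-(5:ℝ)/2) - 2*L)) θ ∧
    1 < ((3/4) * (θ - Xm θ L) ^ (-(5:ℝ)/2)) /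
        ((3/4) * (θ - Xm θ L) ^ (-(5:ℝ)/2) - 2*L) ∧
    HasDerivAt (fun l => Xm θ l)
      ((2 * Xm θ L) / ((3/4) * (θ - Xm θ L) ^ (-(5:ℝ)/2) - 2*L)) L ∧
    0 < (2 * Xm θ L) / ((3/4) * (θ - Xm θ L) ^ (-(5:ℝ)/2) - 2*L) := by
  obtain ⟨hmem, heq⟩ := hXm θ L hθ hL
  obtain ⟨hX1, hX2⟩ := hmem
  have hX0 : 0 < (Xm θ L) := lt_trans (by linarith) hX1
  have hu : 0 < θ - (Xm θ L) := by linarith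
  have hupow : 0 < (θ - (Xm θ L)) ^ (-(5:ℝ)/2) := Real.rpow_pos_of_pos hu _
  have hupow3 : 0 < (θ - (Xm θ L)) ^ (-(3:ℝ)/2) := Real.rpow_pos_of_pos hu _
  have hL0 : 0 < L := by nlinarith
  have h5X : 0 < 5*(Xm θ L) - 2*θ := by linarith
  have e2 : (θ - (Xm θ L)) ^ (-(3:ℝ)/2) = (θ - (Xm θ L)) * (θ - (Xm θ L)) ^ (-(5:ℝ)/2) := by
    rw [show (-(3:ℝ)/2) = 1 + (-(5:ℝ)/2) by norm_num, Real.rpow_add hu, Real.rpow_one]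
  have hA2L : (3/4) * (θ - (Xm θ L)) ^ (-(5:ℝ)/2) - 2*L
      = (θ - (Xm θ L)) ^ (-(5:ℝ)/2) * (5*(Xm θ L) - 2*θ) / (4*(Xm θ L)) := by
    have h2L : 2*L = (θ - (Xm θ L)) ^ (-(3:ℝ)/2) / (2*(Xm θ L)) := by
      field_simp
      linarith
    rw [h2L, e2]
    field_simp
    ring
  have hDpos : 0 < (3/4) * (θ - (Xm θ L)) ^ (-(5:ℝ)/2) - 2*L := by
    rw [hA2L]; positivity
  -- L-direction
  have hFval : ∀ l, Ld θ < l → (θ - Xm θ l) ^ (-(3:ℝ)/2) / (4 * Xm θ l) = l := by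
    intro l hl
    obtain ⟨⟨h1, h2⟩, he⟩ := hXm θ l hθ hl
    have hY0 : 0 < Xm θ l := lt_trans (by linarith) h1
    field_simp
    linarith
  have hevL : ∀ᶠ l in 𝓝 L, (Xm θ l ∈ Ioo (2*θ/5) θ) ∧
      (θ - Xm θ l) ^ (-(3:ℝ)/2) / (4 * Xm θ l) = l := by
    filter_upwards [eventually_gt_nhds hL] with l hl
    exact ⟨(hXm θ l hθ hl).1, hFval l hl⟩
  have hcontL : ContinuousAt (fun l => Xm θ l) L := by
    apply cont_of_inverse (chi_mono θ hθ) hevL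
    intro ε hε
    set e' := min ε (min (((Xm θ L) - 2*θ/5)/2) ((θ - (Xm θ L))/2)) with he'
    have he1 : e' ≤ ((Xm θ L) - 2*θ/5)/2 := le_trans (min_le_right _ _) (min_le_left _ _)
    have hee2 : e' ≤ (θ - (Xm θ L))/2 := le_trans (min_le_right _ _) (min_le_right _ _)
    have he0 : 0 < e' := lt_min hε (lt_min (by linarith) (by linarith))
    exact ⟨e', he0, min_le_left _ _,
      mem_Ioo.2 ⟨by linarith, by linarith⟩, mem_Ioo.2 ⟨by linarith, by linarith⟩⟩
  have hneL : (θ - (Xm θ L)) ^ (-(5:ℝ)/2) * (5*(Xm θ L) - 2*θ) / (8*(Xm θ L)^2) ≠ 0 := by positivity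
  have hDL := HasDerivAt.of_local_left_inverse hcontL (chi_deriv θ (Xm θ L) hX0 hX2) hneL
    (hevL.mono fun l h => h.2)
  have hvalL : ((θ - (Xm θ L)) ^ (-(5:ℝ)/2) * (5*(Xm θ L) - 2*θ) / (8*(Xm θ L)^2))⁻¹
      = 2*(Xm θ L) / ((3/4) * (θ - (Xm θ L)) ^ (-(5:ℝ)/2) - 2*L) := by
    rw [hA2L, inv_div, div_div_eq_mul_div]
    ring
  -- theta-direction
  have hc0 : (0:ℝ) < (4*L) ^ (-(2:ℝ)/3) := Real.rpow_pos_of_pos (by linarith) _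
  have hsolt : ∀ t, 0 < t → Ld t < L →
      Xm t L + (4*L) ^ (-(2:ℝ)/3) * Xm t L ^ (-(2:ℝ)/3) = t ∧
      ((2/3) * (4*L) ^ (-(2:ℝ)/3)) ^ ((3:ℝ)/5) < Xm t L := by
    intro t ht hlt
    obtain ⟨⟨h1, h2⟩, he⟩ := hXm t L ht hlt
    exact sol_fact L _ t (Xm t L) hL0 rfl ht h1 h2 he
  have hXX0 : ((2/3) * (4*L) ^ (-(2:ℝ)/3)) ^ ((3:ℝ)/5) < (Xm θ L) := (hsolt θ hθ hL).2
  have hLd_cont : ContinuousAt Ld θ := by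
    unfold Ld
    exact continuousAt_const.mul (Real.continuousAt_rpow_const θ _ (Or.inl hθ.ne'))
  have hevt : ∀ᶠ t in 𝓝 θ, (Xm t L ∈ Ici (((2/3) * (4*L) ^ (-(2:ℝ)/3)) ^ ((3:ℝ)/5))) ∧
      Xm t L + (4*L) ^ (-(2:ℝ)/3) * Xm t L ^ (-(2:ℝ)/3) = t := by
    filter_upwards [eventually_gt_nhds hθ, hLd_cont.eventually_lt continuousAt_const hL]
      with t ht hlt
    exact ⟨le_of_lt (hsolt t ht hlt).2, (hsolt t ht hlt).1⟩
  have hcontt : ContinuousAt (fun t => Xm t L) θ := by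
    apply cont_of_inverse (psi_mono _ hc0) hevt
    intro ε hε
    set e' := min ε (((Xm θ L) - ((2/3) * (4*L) ^ (-(2:ℝ)/3)) ^ ((3:ℝ)/5))/2) with he'
    have he1 : e' ≤ ((Xm θ L) - ((2/3) * (4*L) ^ (-(2:ℝ)/3)) ^ ((3:ℝ)/5))/2 := min_le_right _ _
    have he0 : 0 < e' := lt_min hε (by linarith)
    exact ⟨e', he0, min_le_left _ _, mem_Ici.2 (by linarith), mem_Ici.2 (by linarith)⟩
  have hcX : (4*L) ^ (-(2:ℝ)/3) * (Xm θ L) ^ (-(2:ℝ)/3) = θ - (Xm θ L) := by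
    have := (hsolt θ hθ hL).1
    linarith
  have hc5 : (4*L) ^ (-(2:ℝ)/3) * (Xm θ L) ^ (-(5:ℝ)/3) = (θ - (Xm θ L))/(Xm θ L) := by
    rw [show (-(5:ℝ)/3) = (-(2:ℝ)/3) + (-1:ℝ) by norm_num, Real.rpow_add hX0,
      Real.rpow_neg_one, ← mul_assoc, hcX, div_eq_mul_inv]
  have hGd : 1 + (4*L) ^ (-(2:ℝ)/3) * ((-(2:ℝ)/3) * (Xm θ L) ^ (-(5:ℝ)/3)) = (5*(Xm θ L) - 2*θ)/(3*(Xm θ L)) := by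
    rw [show (4*L) ^ (-(2:ℝ)/3) * ((-(2:ℝ)/3) * (Xm θ L) ^ (-(5:ℝ)/3))
        = (-(2:ℝ)/3) * ((4*L) ^ (-(2:ℝ)/3) * (Xm θ L) ^ (-(5:ℝ)/3)) by ring, hc5]
    field_simp
    ring
  have hnet : 1 + (4*L) ^ (-(2:ℝ)/3) * ((-(2:ℝ)/3) * (Xm θ L) ^ (-(5:ℝ)/3)) ≠ 0 := by
    rw [hGd]; positivity
  have hDt := HasDerivAt.of_local_left_inverse hcontt (psi_deriv ((4*L) ^ (-(2:ℝ)/3)) (Xm θ L) hX0)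
    hnet (hevt.mono fun t h => h.2)
  have hvalt : (1 + (4*L) ^ (-(2:ℝ)/3) * ((-(2:ℝ)/3) * (Xm θ L) ^ (-(5:ℝ)/3)))⁻¹
      = (3/4) * (θ - (Xm θ L)) ^ (-(5:ℝ)/2) / ((3/4) * (θ - (Xm θ L)) ^ (-(5:ℝ)/2) - 2*L) := by
    rw [hGd, hA2L, inv_div]
    rw [div_div_eq_mul_div]
    rw [eq_div_iff (by positivity)]
    field_simp [h5X.ne']
    ring_nf
    rw [show Xm θ L * (Xm θ L * 5 - θ * 2)⁻¹ * 5 - θ * (Xm θ L * 5 - θ * 2)⁻¹ * 2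
        = (Xm θ L * 5 - θ * 2) * (Xm θ L * 5 - θ * 2)⁻¹ by ring]
    exact mul_inv_cancel₀ (by linarith)
  exact ⟨hvalt ▸ hDt, (one_lt_div hDpos).2 (by linarith),
    hvalL ▸ hDL, div_pos (by linarith) hDpos⟩
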